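/- Let η ∈ (0,1), let v₁,…,v_K ∈ R^d satisfy ‖v_i‖ ≥ 1/2 for all i and |⟨v_i,v_j⟩| ≤ η for all i ≠ j, and let y₁,…,y_K ∈ {0,1} with at most K₁ labels equal to 1. If K₁ log K ≤ c η⁻² for a sufficiently small absolute constant c > 0, then there exists w ∈ R^d such that for every k: |⟨w,v_k⟩| ≤ 1/16 if y_k = 0, and |⟨w,v_k⟩| ≥ 3/16 if y_k = 1. -/

import Mathlib

open Finset Real

noncomputable def sgn (b : Bool) : ℝ := if b then 1 else -1

lemma chernoff {K : ℕ} (a : Fin K → ℝ) (t V : ℝ) (ht : 0 < t) (hV : 0 < V)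
    (hva : ∑ i, a i ^ 2 ≤ V) :
    ((univ.filter fun ξ : Fin K → Bool => t ≤ ∑ i, sgn (ξ i) * a i).card : ℝ)
      ≤ 2 ^ K * Real.exp (-t ^ 2 / (2 * V)) := by
  set lam := t / V with hlamdef
  have hlam : 0 < lam := div_pos ht hV
  have hsum : ∑ ξ : Fin K → Bool, Real.exp (lam * ∑ i, sgn (ξ i) * a i)
      ≤ 2 ^ K * Real.exp (lam ^ 2 * V / 2) := by
    have h1 : ∀ ξ : Fin K → Bool, Real.exp (lam * ∑ i, sgn (ξ i) * a i)
        = ∏ i, Real.exp (lam * (sgn (ξ i) * a i)) := by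
      intro ξ
      rw [Finset.mul_sum, Real.exp_sum]
    calc ∑ ξ : Fin K → Bool, Real.exp (lam * ∑ i, sgn (ξ i) * a i)
        = ∑ ξ : Fin K → Bool, ∏ i, Real.exp (lam * (sgn (ξ i) * a i)) := by
          simp only [h1]
      _ = ∏ i, ∑ b : Bool, Real.exp (lam * (sgn b * a i)) := by
          rw [← Fintype.piFinset_univ]
          exact Finset.sum_prod_piFinset univ fun i b => Real.exp (lam * (sgn b * a i))
      _ ≤ ∏ i, 2 * Real.exp ((lam * a i) ^ 2 / 2) := by
          apply Finset.prod_le_prod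
          · intro i _
            apply Finset.sum_nonneg
            intro b _
            positivity
          · intro i _
            have hc : ∑ b : Bool, Real.exp (lam * (sgn b * a i))
                = 2 * Real.cosh (lam * a i) := by
              rw [Real.cosh_eq]
              simp [sgn]
              ring_nf
            rw [hc]
            have := Real.cosh_le_exp_half_sq (lam * a i)
            linarith
      _ = 2 ^ K * Real.exp (∑ i, (lam * a i) ^ 2 / 2) := by
          rw [Finset.prod_mul_distrib, Finset.prod_const, ← Real.exp_sum, Finset.card_univ,
            Fintype.card_fin]
      _ ≤ 2 ^ K * Real.exp (lam ^ 2 * V / 2) := by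
          apply mul_le_mul_of_nonneg_left _ (by positivity)
          apply Real.exp_le_exp.mpr
          have : ∑ i, (lam * a i) ^ 2 / 2 = lam ^ 2 * (∑ i, a i ^ 2) / 2 := by
            rw [Finset.mul_sum, Finset.sum_div]
            congr 1 with i
            ring
          rw [this]
          nlinarith [sq_nonneg lam]
  have hlb : ((univ.filter fun ξ : Fin K → Bool => t ≤ ∑ i, sgn (ξ i) * a i).card : ℝ)
      * Real.exp (lam * t)
      ≤ ∑ ξ : Fin K → Bool, Real.exp (lam * ∑ i, sgn (ξ i) * a i) := by
    calc ((univ.filter fun ξ : Fin K → Bool => t ≤ ∑ i, sgn (ξ i) * a i).card : ℝ)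
        * Real.exp (lam * t)
        ≤ ∑ ξ ∈ univ.filter fun ξ : Fin K → Bool => t ≤ ∑ i, sgn (ξ i) * a i,
            Real.exp (lam * ∑ i, sgn (ξ i) * a i) := by
          rw [← nsmul_eq_mul]
          apply Finset.card_nsmul_le_sum
          intro ξ hξ
          simp only [Finset.mem_filter] at hξ
          exact Real.exp_le_exp.mpr (by nlinarith [hξ.2])
      _ ≤ ∑ ξ : Fin K → Bool, Real.exp (lam * ∑ i, sgn (ξ i) * a i) := by
          apply Finset.sum_le_sum_of_subset_of_nonneg (Finset.filter_subset _ _)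
          intro ξ _ _
          positivity
  have hexp : Real.exp (lam ^ 2 * V / 2) / Real.exp (lam * t) = Real.exp (-t ^ 2 / (2 * V)) := by
    rw [← Real.exp_sub]
    congr 1
    rw [hlamdef]
    field_simp
    ring
  have hE : (0:ℝ) < Real.exp (lam * t) := Real.exp_pos _
  rw [← hexp, ← mul_div_assoc, le_div_iff₀ hE]
  calc _ ≤ ∑ ξ : Fin K → Bool, Real.exp (lam * ∑ i, sgn (ξ i) * a i) := hlb
    _ ≤ 2 ^ K * Real.exp (lam ^ 2 * V / 2) := hsum

lemma chernoff_abs {K : ℕ} (a : Fin K → ℝ) (t V : ℝ) (ht : 0 < t) (hV : 0 < V)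
    (hva : ∑ i, a i ^ 2 ≤ V) :
    ((univ.filter fun ξ : Fin K → Bool => t < |∑ i, sgn (ξ i) * a i|).card : ℝ)
      ≤ 2 * (2 ^ K * Real.exp (-t ^ 2 / (2 * V))) := by
  have hsub : (univ.filter fun ξ : Fin K → Bool => t < |∑ i, sgn (ξ i) * a i|)
      ⊆ (univ.filter fun ξ : Fin K → Bool => t ≤ ∑ i, sgn (ξ i) * a i)
        ∪ (univ.filter fun ξ : Fin K → Bool => t ≤ ∑ i, sgn (ξ i) * (-a i)) := by
    intro ξ hξ
    simp only [Finset.mem_filter, Finset.mem_union, Finset.mem_univ, true_and] at hξ ⊢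
    rcases le_abs.mp hξ.le with h | h
    · exact Or.inl h
    · right
      have : ∑ i, sgn (ξ i) * (-a i) = -∑ i, sgn (ξ i) * a i := by
        rw [← Finset.sum_neg_distrib]
        exact Finset.sum_congr rfl fun i _ => by ring
      rw [this]
      exact h
  calc ((univ.filter fun ξ : Fin K → Bool => t < |∑ i, sgn (ξ i) * a i|).card : ℝ)
      ≤ (((univ.filter fun ξ : Fin K → Bool => t ≤ ∑ i, sgn (ξ i) * a i)
        ∪ (univ.filter fun ξ : Fin K → Bool => t ≤ ∑ i, sgn (ξ i) * (-a i))).card : ℝ) := by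
        exact_mod_cast Finset.card_le_card hsub
    _ ≤ ((univ.filter fun ξ : Fin K → Bool => t ≤ ∑ i, sgn (ξ i) * a i).card : ℝ)
        + ((univ.filter fun ξ : Fin K → Bool => t ≤ ∑ i, sgn (ξ i) * (-a i)).card : ℝ) := by
        exact_mod_cast Finset.card_union_le _ _
    _ ≤ 2 ^ K * Real.exp (-t ^ 2 / (2 * V)) + 2 ^ K * Real.exp (-t ^ 2 / (2 * V)) := by
        gcongr
        · exact chernoff a t V ht hV hva
        · exact chernoff (fun i => -a i) t V ht hV (by simpa using hva)
    _ = 2 * (2 ^ K * Real.exp (-t ^ 2 / (2 * V))) := by ring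

/-- Perception lemma: a single "mirror perceptron" vector `w` separating the
labels of almost-orthogonal vectors. -/
theorem stmt6 :
    ∃ c : ℝ, 0 < c ∧
      ∀ (η : ℝ), 0 < η → η < 1 →
      ∀ (d K K₁ : ℕ) (v : Fin K → Fin d → ℝ) (y : Fin K → ℝ),
        (∀ k, (1 : ℝ) / 2 ≤ Real.sqrt (∑ j, v k j ^ 2)) →
        (∀ i j, i ≠ j → |∑ l, v i l * v j l| ≤ η) →
        (∀ k, y k = 0 ∨ y k = 1) →
        ({k | y k = 1} : Set (Fin K)).ncard ≤ K₁ →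
        (K₁ : ℝ) * Real.log K ≤ c * (η ^ 2)⁻¹ →
        ∃ w : Fin d → ℝ, ∀ k,
          (y k = 0 → |∑ j, w j * v k j| ≤ 1 / 16) ∧
          (y k = 1 → 3 / 16 ≤ |∑ j, w j * v k j|) := by
  refine ⟨1/4096, by norm_num, ?_⟩
  intro η hη0 hη1 d K K₁ v y hnorm hip hy hK₁ hc
  have hη2 : (0:ℝ) < η ^ 2 := by positivity
  -- squared norms are at least 1/4
  have hnormsq : ∀ k, (1:ℝ)/4 ≤ ∑ j, v k j ^ 2 := by
    intro k
    have h0 : (0:ℝ) ≤ ∑ j, v k j ^ 2 := Finset.sum_nonneg fun j _ => sq_nonneg _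
    have := (Real.le_sqrt (by norm_num) h0).mp (hnorm k)
    calc (1:ℝ)/4 = (1/2:ℝ)^2 := by norm_num
      _ ≤ _ := this
  -- trivial case: all labels 0
  by_cases hall : ∀ k, y k = 0
  · refine ⟨fun _ => 0, fun k => ⟨fun _ => by simp, fun h1 => ?_⟩⟩
    rw [hall k] at h1; norm_num at h1
  push_neg at hall
  obtain ⟨k₀, hk₀⟩ := hall
  have hyk₀ : y k₀ = 1 := (hy k₀).resolve_left hk₀
  have hK₁pos : 1 ≤ K₁ := by
    have h1 : 0 < ({k | y k = 1} : Set (Fin K)).ncard :=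
      (Set.ncard_pos (Set.toFinite _)).mpr ⟨k₀, hyk₀⟩
    omega
  -- case K = 1
  by_cases hK1 : K = 1
  · refine ⟨v k₀, fun k => ?_⟩
    have hk : k = k₀ := Fin.ext (by omega)
    subst hk
    constructor
    · intro h0; rw [h0] at hyk₀; norm_num at hyk₀
    · intro _
      have hrw : ∑ j, v k j * v k j = ∑ j, v k j ^ 2 := by
        apply Finset.sum_congr rfl; intro j _; ring
      rw [hrw, abs_of_nonneg (Finset.sum_nonneg fun j _ => sq_nonneg _)]
      linarith [hnormsq k]
  have hK2 : 2 ≤ K := by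
    rcases Nat.lt_or_ge K 2 with h | h
    · interval_cases K
      · exact absurd k₀.2 (by omega)
      · exact absurd rfl hK1
    · exact h
  -- main case
  set ip : Fin K → Fin K → ℝ := fun i k => ∑ l, v i l * v k l with hipdef
  set a : Fin K → Fin K → ℝ := fun k i => if i = k then 0 else y i * ip i k with hadef
  set V : ℝ := K₁ * η ^ 2 with hVdef
  have hV : 0 < V := by
    have : (1:ℝ) ≤ K₁ := by exact_mod_cast hK₁pos
    nlinarith
  -- cardinality of label-1 set as a finset
  have hcard1 : (univ.filter fun k => y k = 1).card ≤ K₁ := by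
    have hset : ({k | y k = 1} : Set (Fin K)) = ↑(univ.filter fun k => y k = 1) := by
      ext k; simp
    rwa [hset, Set.ncard_coe_finset] at hK₁
  -- variance bound
  have hvar : ∀ k, ∑ i, a k i ^ 2 ≤ V := by
    intro k
    calc ∑ i, a k i ^ 2 ≤ ∑ i, (if y i = 1 then η ^ 2 else 0) := by
          apply Finset.sum_le_sum
          intro i _
          by_cases hik : i = k
          · simp only [hadef, hik, if_true]
            simp only [ne_eq, zero_pow, OfNat.ofNat_ne_zero, not_false_eq_true]
            positivity
          · rcases hy i with h0 | h1
            · simp only [hadef, hik, if_false, h0, zero_mul, ne_eq, zero_pow,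
                OfNat.ofNat_ne_zero, not_false_eq_true]
              positivity
            · simp only [hadef, hik, if_false, h1, if_true, one_mul]
              have habs := hip i k hik
              calc (ip i k) ^ 2 = |ip i k| ^ 2 := (sq_abs _).symm
                _ ≤ η ^ 2 := by gcongr
      _ = ((univ.filter fun i => y i = 1).card : ℝ) * η ^ 2 := by
          rw [← Finset.sum_filter, Finset.sum_const, nsmul_eq_mul]
      _ ≤ V := by
          rw [hVdef]
          gcongr
  classical
  have hKpos : (0:ℝ) < K := by exact_mod_cast (by omega : 0 < K)
  -- numeric inequality
  have hVlog : V * Real.log K ≤ 1/4096 := by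
    have h := mul_le_mul_of_nonneg_right hc (le_of_lt hη2)
    calc V * Real.log K = (↑K₁ * Real.log K) * η ^ 2 := by rw [hVdef]; ring
      _ ≤ (1/4096 * (η^2)⁻¹) * η ^ 2 := h
      _ = 1/4096 := by field_simp
  have hlogK : Real.log 2 ≤ Real.log K :=
    Real.log_le_log (by norm_num) (by exact_mod_cast hK2)
  have hlogKpos : 0 < Real.log K := lt_of_lt_of_le (Real.log_pos one_lt_two) hlogK
  have hlog2K : Real.log (2 * K) = Real.log 2 + Real.log K :=
    Real.log_mul (by norm_num) (ne_of_gt hKpos)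
  have hkey : Real.log (2 * K) < (1/16:ℝ) ^ 2 / (2 * V) := by
    rw [lt_div_iff₀ (by positivity), hlog2K]
    nlinarith [hVlog, hlogK, hlogKpos, hV]
  have hexplt : Real.exp (-(1/16:ℝ) ^ 2 / (2 * V)) < (2 * (K:ℝ))⁻¹ := by
    have h1 : Real.exp (-(1/16:ℝ) ^ 2 / (2 * V)) < Real.exp (-Real.log (2 * K)) := by
      apply Real.exp_lt_exp.mpr
      rw [neg_div]
      exact neg_lt_neg hkey
    rwa [Real.exp_neg, Real.exp_log (by positivity)] at h1
  -- union bound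
  set P : (Fin K → Bool) → Prop :=
    fun ξ => ∃ k, (1:ℝ)/16 < |∑ i, sgn (ξ i) * a k i| with hPdef
  have hbad : ((univ.filter P).card : ℝ) < ((univ : Finset (Fin K → Bool)).card : ℝ) := by
    have hsub : univ.filter P ⊆ univ.biUnion fun k =>
        univ.filter fun ξ : Fin K → Bool => (1:ℝ)/16 < |∑ i, sgn (ξ i) * a k i| := by
      intro ξ hξ
      simp only [hPdef, Finset.mem_filter, Finset.mem_univ, true_and] at hξ
      obtain ⟨k, hk⟩ := hξ
      exact Finset.mem_biUnion.mpr
        ⟨k, Finset.mem_univ k, Finset.mem_filter.mpr ⟨Finset.mem_univ ξ, hk⟩⟩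
    have hcardbi : ((univ.filter P).card : ℝ)
        ≤ ∑ k : Fin K, ((univ.filter fun ξ : Fin K → Bool =>
            (1:ℝ)/16 < |∑ i, sgn (ξ i) * a k i|).card : ℝ) := by
      calc ((univ.filter P).card : ℝ)
          ≤ (((univ : Finset (Fin K)).biUnion fun k => univ.filter fun ξ : Fin K → Bool =>
              (1:ℝ)/16 < |∑ i, sgn (ξ i) * a k i|).card : ℝ) := by
            exact_mod_cast Finset.card_le_card hsub
        _ ≤ _ := by exact_mod_cast Finset.card_biUnion_le
    have hcu : ((univ : Finset (Fin K → Bool)).card : ℝ) = 2 ^ K := by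
      rw [Finset.card_univ]
      simp [Fintype.card_fun]
    calc ((univ.filter P).card : ℝ)
        ≤ ∑ k : Fin K, ((univ.filter fun ξ : Fin K → Bool =>
            (1:ℝ)/16 < |∑ i, sgn (ξ i) * a k i|).card : ℝ) := hcardbi
      _ ≤ ∑ _k : Fin K, 2 * (2 ^ K * Real.exp (-(1/16:ℝ) ^ 2 / (2 * V))) := by
          apply Finset.sum_le_sum
          intro k _
          exact chernoff_abs (a k) (1/16) V (by norm_num) hV (hvar k)
      _ = (K : ℝ) * (2 * (2 ^ K * Real.exp (-(1/16:ℝ) ^ 2 / (2 * V)))) := by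
          rw [Finset.sum_const, Finset.card_univ, Fintype.card_fin, nsmul_eq_mul]
      _ = 2 ^ K * (2 * (K:ℝ) * Real.exp (-(1/16:ℝ) ^ 2 / (2 * V))) := by ring
      _ < 2 ^ K * 1 := by
          apply mul_lt_mul_of_pos_left _ (by positivity)
          calc 2 * (K:ℝ) * Real.exp (-(1/16:ℝ) ^ 2 / (2 * V))
              < 2 * (K:ℝ) * (2 * (K:ℝ))⁻¹ := by
                apply mul_lt_mul_of_pos_left hexplt (by positivity)
            _ = 1 := by field_simp
      _ = ((univ : Finset (Fin K → Bool)).card : ℝ) := by rw [hcu, mul_one]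
  have hltn : (univ.filter P).card < (univ : Finset (Fin K → Bool)).card := by
    exact_mod_cast hbad
  have hne : (univ.filter fun ξ => ¬ P ξ).Nonempty := by
    rw [← Finset.card_pos]
    have := Finset.card_filter_add_card_filter_not (s := (univ : Finset (Fin K → Bool)))
      (p := P)
    omega
  obtain ⟨ξ, hξ⟩ := hne
  have hgood : ∀ k, |∑ i, sgn (ξ i) * a k i| ≤ 1/16 := by
    have h := (Finset.mem_filter.mp hξ).2
    simp only [hPdef, not_exists, not_lt] at h
    exact h
  -- construct w
  refine ⟨fun j => ∑ i, sgn (ξ i) * (y i * v i j), fun k => ?_⟩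
  have hswap : ∑ j, (∑ i, sgn (ξ i) * (y i * v i j)) * v k j
      = ∑ i, sgn (ξ i) * (y i * ip i k) := by
    simp only [Finset.sum_mul]
    rw [Finset.sum_comm]
    apply Finset.sum_congr rfl
    intro i _
    simp only [hipdef, Finset.mul_sum]
    apply Finset.sum_congr rfl
    intro j _
    ring
  have hsplit : ∑ i, sgn (ξ i) * (y i * ip i k)
      = sgn (ξ k) * (y k * ip k k) + ∑ i, sgn (ξ i) * a k i := by
    have hpt : ∀ i ∈ (univ : Finset (Fin K)), sgn (ξ i) * (y i * ip i k)
        = (if i = k then sgn (ξ k) * (y k * ip k k) else 0) + sgn (ξ i) * a k i := by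
      intro i _
      by_cases hik : i = k
      · subst hik; simp [hadef]
      · simp [hadef, hik]
    rw [Finset.sum_congr rfl hpt, Finset.sum_add_distrib, Finset.sum_ite_eq' univ k]
    simp
  rw [hswap, hsplit]
  have hnoise := hgood k
  constructor
  · intro h0
    rw [h0]
    simp only [zero_mul, mul_zero, zero_add]
    exact hnoise
  · intro h1
    rw [h1]
    have hipkk : (1:ℝ)/4 ≤ ip k k := by
      have hrw : ip k k = ∑ j, v k j ^ 2 := by
        simp only [hipdef]
        apply Finset.sum_congr rfl
        intro j _
        ring
      rw [hrw]
      exact hnormsq k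
    have hsgn : |sgn (ξ k)| = 1 := by cases hb : ξ k <;> simp [sgn, hb]
    have h2 : |sgn (ξ k) * (1 * ip k k)| = ip k k := by
      rw [abs_mul, hsgn, one_mul, one_mul, abs_of_nonneg (by linarith)]
    have h3 := abs_sub_abs_le_abs_sub (sgn (ξ k) * (1 * ip k k)) (-(∑ i, sgn (ξ i) * a k i))
    rw [sub_neg_eq_add, abs_neg, h2] at h3
    linarith
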